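/- Let N(e) denote the number of edges overlapping with edge e in a temporal graph with edge set E, |E| = m, and let N* = (1/m)·∑_{e∈E} N(e) be the average overlapping number. Then the greedy algorithm that repeatedly selects an edge with minimum current overlapping number and deletes it together with its overlapping edges outputs a 0-1 timed matching of size at least m / (N* + 1); in particular, since any 0-1 timed matching has size at most m, the greedy output is a 1/(N*+1)-approximation of the maximum 0-1 timed matching. -/
import Mathlib


/-- Two edges of a temporal graph overlap if they are distinct, share an endpoint,
and exist at a common timestep. -/
def Overlaps {V : Type*} (τ : Sym2 V → Set ℕ) (e f : Sym2 V) : Prop :=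
  e ≠ f ∧ (∃ v, v ∈ e ∧ v ∈ f) ∧ (τ e ∩ τ f).Nonempty

/-- A 0-1 timed matching: no two edges of `M` overlap. -/
def IsTimedMatching {V : Type*} (τ : Sym2 V → Set ℕ) (M : Set (Sym2 V)) : Prop :=
  ∀ e ∈ M, ∀ f ∈ M, ¬ Overlaps τ e f

/-- The overlapping number of the edge `e` within the edge set `S`. -/
noncomputable def ovNum {V : Type*} (τ : Sym2 V → Set ℕ) (S : Set (Sym2 V)) (e : Sym2 V) : ℕ :=
  {f ∈ S | Overlaps τ e f}.ncard

lemma overlaps_symm {V : Type*} (τ : Sym2 V → Set ℕ) {e f : Sym2 V}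
    (h : Overlaps τ e f) : Overlaps τ f e := by
  obtain ⟨hne, ⟨v, hv1, hv2⟩, ⟨s, hs1, hs2⟩⟩ := h
  exact ⟨hne.symm, ⟨v, hv2, hv1⟩, ⟨s, hs2, hs1⟩⟩

lemma ovNum_mono {V : Type*} (τ : Sym2 V → Set ℕ) {A B : Set (Sym2 V)}
    (hAB : A ⊆ B) (hB : B.Finite) (e : Sym2 V) : ovNum τ A e ≤ ovNum τ B e := by
  apply Set.ncard_le_ncard
  · intro x hx; exact ⟨hAB hx.1, hx.2⟩
  · exact hB.subset (Set.sep_subset _ _)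

/-- The greedy algorithm repeatedly selects an edge with minimum current overlapping
number and deletes it together with all edges overlapping it, until no edge remains.
Its output is a 0-1 timed matching of size at least `m / (N* + 1)`, where `N*` is the
average overlapping number of the edges of `E`; in particular, since every 0-1 timed
matching has size at most `m`, the output is a `1/(N*+1)`-approximation of a maximum
0-1 timed matching. -/
theorem stmt16 {V : Type*} [DecidableEq V] (τ : Sym2 V → Set ℕ)
    (E : Finset (Sym2 V)) (t : ℕ) (S : ℕ → Finset (Sym2 V)) (p : ℕ → Sym2 V)
    (hS0 : S 0 = E) (hSt : S t = ∅)
    (hp : ∀ i < t, p i ∈ S i)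
    (hmin : ∀ i < t, ∀ x ∈ S i, ovNum τ ↑(S i) (p i) ≤ ovNum τ ↑(S i) x)
    (hstep : ∀ i < t, (↑(S (i + 1)) : Set (Sym2 V)) =
      {x ∈ (↑(S i) : Set (Sym2 V)) | x ≠ p i ∧ ¬ Overlaps τ (p i) x}) :
    IsTimedMatching τ ↑((Finset.range t).image p) ∧
    (E.card : ℝ) /
        ((∑ e ∈ E, (ovNum τ ↑E e : ℝ)) / E.card + 1) ≤
      ((Finset.range t).image p).card ∧
    ∀ OPT : Set (Sym2 V), OPT ⊆ ↑E → IsTimedMatching τ OPT →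
      (OPT.ncard : ℝ) /
          ((∑ e ∈ E, (ovNum τ ↑E e : ℝ)) / E.card + 1) ≤
        ((Finset.range t).image p).card := by
  classical
  -- basic structure of the chain `S`
  have hsub : ∀ i < t, S (i + 1) ⊆ S i := by
    intro i hi x hx
    have hx' : (x : Sym2 V) ∈ (↑(S (i + 1)) : Set (Sym2 V)) := hx
    rw [hstep i hi] at hx'
    exact hx'.1
  have hchain : ∀ i j, i ≤ j → j ≤ t → S j ⊆ S i := by
    intro i j hij hjt
    induction j with
    | zero => simp_all
    | succ n ih =>
      rcases Nat.eq_or_lt_of_le hij with h | h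
      · rw [h]
      · exact Finset.Subset.trans
          (hsub n (lt_of_lt_of_le (Nat.lt_succ_self n) hjt))
          (ih (Nat.lt_succ_iff.mp h) (le_trans (Nat.le_succ n) hjt))
  -- the deleted sets
  set D : ℕ → Finset (Sym2 V) := fun i => S i \ S (i + 1) with hD
  have hpnot : ∀ i < t, p i ∉ S (i + 1) := by
    intro i hi hmem
    have : (p i : Sym2 V) ∈ (↑(S (i + 1)) : Set (Sym2 V)) := hmem
    rw [hstep i hi] at this
    exact this.2.1 rfl
  have hpD : ∀ i < t, p i ∈ D i := fun i hi =>
    Finset.mem_sdiff.mpr ⟨hp i hi, hpnot i hi⟩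
  have hDsub : ∀ i, D i ⊆ S i := fun i => Finset.sdiff_subset
  -- coe description of D
  have hDcoe : ∀ i < t, (↑(D i) : Set (Sym2 V)) =
      insert (p i) {x ∈ (↑(S i) : Set (Sym2 V)) | Overlaps τ (p i) x} := by
    intro i hi
    ext x
    simp only [hD, Finset.coe_sdiff, Set.mem_diff, Finset.mem_coe, Set.mem_insert_iff,
      Set.mem_setOf_eq]
    constructor
    · rintro ⟨hxS, hxnot⟩
      have : (x : Sym2 V) ∉ (↑(S (i + 1)) : Set (Sym2 V)) := hxnot
      rw [hstep i hi] at this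
      simp only [Set.mem_setOf_eq, Finset.mem_coe, not_and, not_not] at this
      rcases eq_or_ne x (p i) with h | h
      · exact Or.inl h
      · exact Or.inr ⟨hxS, this hxS h⟩
    · rintro (rfl | ⟨hxS, hov⟩)
      · exact ⟨hp i hi, hpnot i hi⟩
      · refine ⟨hxS, fun hmem => ?_⟩
        have : (x : Sym2 V) ∈ (↑(S (i + 1)) : Set (Sym2 V)) := hmem
        rw [hstep i hi] at this
        exact this.2.2 hov
  -- card of D i
  have hDcard : ∀ i < t, (D i).card = ovNum τ ↑(S i) (p i) + 1 := by
    intro i hi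
    have h1 : (D i).card = (↑(D i) : Set (Sym2 V)).ncard := (Set.ncard_coe_finset _).symm
    have hnot : p i ∉ {x ∈ (↑(S i) : Set (Sym2 V)) | Overlaps τ (p i) x} :=
      fun h => h.2.1 rfl
    have hfin : ({x ∈ (↑(S i) : Set (Sym2 V)) | Overlaps τ (p i) x}).Finite :=
      (S i).finite_toSet.subset (Set.sep_subset _ _)
    rw [h1, hDcoe i hi, Set.ncard_insert_of_notMem hnot hfin, ovNum]
  -- E is the disjoint union of the D i
  have hEeq : E = (Finset.range t).biUnion D := by
    ext e
    simp only [Finset.mem_biUnion, Finset.mem_range]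
    constructor
    · intro he
      by_contra hcon
      push_neg at hcon
      have hstep' : ∀ k, k ≤ t → e ∈ S k := by
        intro k
        induction k with
        | zero => intro _; rw [hS0]; exact he
        | succ n ih =>
          intro hk
          have hn : e ∈ S n := ih (le_trans (Nat.le_succ n) hk)
          by_contra hnot
          exact hcon n hk (Finset.mem_sdiff.mpr ⟨hn, hnot⟩)
      have := hstep' t le_rfl
      rw [hSt] at this
      exact absurd this (Finset.notMem_empty e)
    · rintro ⟨i, hi, hei⟩
      have : e ∈ S 0 := hchain 0 i (Nat.zero_le i) hi.le (hDsub i hei)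
      rwa [hS0] at this
  have hdisj : ∀ i ∈ Finset.range t, ∀ j ∈ Finset.range t, i ≠ j →
      Disjoint (D i) (D j) := by
    have key : ∀ i j, i < j → j < t → Disjoint (D i) (D j) := by
      intro i j hij hjt
      rw [Finset.disjoint_left]
      intro x hxi hxj
      have hxS : x ∈ S (i + 1) := hchain (i + 1) j hij hjt.le (hDsub j hxj)
      exact (Finset.mem_sdiff.mp hxi).2 hxS
    intro i hi j hj hij
    simp only [Finset.mem_range] at hi hj
    rcases lt_or_gt_of_ne hij with h | h
    · exact key i j h hj
    · exact (key j i h hi).symm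
  -- injectivity of p
  have hpne : ∀ i j, i < j → j < t → p i ≠ p j := by
    intro i j hij hjt hpij
    have : p i ∈ S (i + 1) := hchain (i + 1) j hij hjt.le (hpij ▸ hp j hjt)
    exact hpnot i (hij.trans hjt) this
  have hinj : Set.InjOn p ↑(Finset.range t) := by
    intro i hi j hj hpij
    simp only [Finset.coe_range, Set.mem_Iio] at hi hj
    rcases lt_trichotomy i j with h | h | h
    · exact absurd hpij (hpne i j h hj)
    · exact h
    · exact absurd hpij.symm (hpne j i h hi)
  have hcardim : ((Finset.range t).image p).card = t := by
    rw [Finset.card_image_of_injOn hinj, Finset.card_range]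
  -- the matching property
  have hmatch : IsTimedMatching τ ↑((Finset.range t).image p) := by
    intro e he f hf hov
    simp only [Finset.coe_image, Finset.coe_range, Set.mem_image, Set.mem_Iio] at he hf
    obtain ⟨i, hi, rfl⟩ := he
    obtain ⟨j, hj, rfl⟩ := hf
    have hnov : ∀ a b, a < b → b < t → ¬ Overlaps τ (p a) (p b) := by
      intro a b hab hbt hcon
      have : p b ∈ S (a + 1) := hchain (a + 1) b hab hbt.le (hp b hbt)
      have h2 : (p b : Sym2 V) ∈ (↑(S (a + 1)) : Set (Sym2 V)) := this
      rw [hstep a (hab.trans hbt)] at h2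
      exact h2.2.2 hcon
    rcases lt_trichotomy i j with h | h | h
    · exact hnov i j h hj hov
    · exact hov.1 (h ▸ rfl)
    · exact hnov j i h hi (overlaps_symm τ hov)
  -- notation
  set m : ℕ := E.card with hm
  set A : ℕ := ∑ e ∈ E, ovNum τ ↑E e with hA
  -- counting: m = ∑ |D i|
  have hmsum : m = ∑ i ∈ Finset.range t, (D i).card := by
    rw [hm, hEeq, Finset.card_biUnion hdisj]
  -- every element of D i has big overlapping number in E
  have hlow : ∀ i < t, ∀ f ∈ D i, ovNum τ ↑(S i) (p i) ≤ ovNum τ ↑E f := by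
    intro i hi f hf
    have hfS : f ∈ S i := hDsub i hf
    have h1 : ovNum τ ↑(S i) (p i) ≤ ovNum τ ↑(S i) f := hmin i hi f hfS
    have h2 : ovNum τ ↑(S i) f ≤ ovNum τ ↑E f := by
      apply ovNum_mono
      · intro x hx
        have : x ∈ S 0 := hchain 0 i (Nat.zero_le i) hi.le hx
        rwa [hS0] at this
      · exact E.finite_toSet
    exact h1.trans h2
  -- A ≥ ∑ N_i |D i|
  have hA2 : A = ∑ i ∈ Finset.range t, ∑ f ∈ D i, ovNum τ ↑E f := by
    conv_lhs => rw [hA]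
    rw [← Finset.sum_biUnion hdisj]
    exact Finset.sum_congr hEeq (fun _ _ => rfl)
  have hAsum : ∑ i ∈ Finset.range t, ovNum τ ↑(S i) (p i) * (D i).card ≤ A := by
    rw [hA2]
    apply Finset.sum_le_sum
    intro i hi
    simp only [Finset.mem_range] at hi
    calc ovNum τ ↑(S i) (p i) * (D i).card
        = ∑ _f ∈ D i, ovNum τ ↑(S i) (p i) := by rw [Finset.sum_const, smul_eq_mul, mul_comm]
      _ ≤ ∑ f ∈ D i, ovNum τ ↑E f := Finset.sum_le_sum (fun f hf => hlow i hi f hf)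
  -- sum of squares bound
  have hsq : ∑ i ∈ Finset.range t, (D i).card ^ 2 ≤ A + m := by
    calc ∑ i ∈ Finset.range t, (D i).card ^ 2
        = ∑ i ∈ Finset.range t,
            (ovNum τ ↑(S i) (p i) * (D i).card + (D i).card) := by
          apply Finset.sum_congr rfl
          intro i hi
          simp only [Finset.mem_range] at hi
          rw [hDcard i hi]; ring
      _ = (∑ i ∈ Finset.range t, ovNum τ ↑(S i) (p i) * (D i).card) +
            ∑ i ∈ Finset.range t, (D i).card := Finset.sum_add_distrib
      _ ≤ A + m := by
          apply Nat.add_le_add hAsum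
          rw [hmsum]
  -- Cauchy–Schwarz
  have hCS : m ^ 2 ≤ t * (A + m) := by
    calc m ^ 2 = (∑ i ∈ Finset.range t, (D i).card) ^ 2 := by rw [hmsum]
      _ ≤ (Finset.range t).card * ∑ i ∈ Finset.range t, (D i).card ^ 2 :=
          sq_sum_le_card_mul_sum_sq
      _ ≤ t * (A + m) := by
          rw [Finset.card_range]
          exact Nat.mul_le_mul_left t hsq
  -- the main real inequality
  have hAcast : (∑ e ∈ E, (ovNum τ ↑E e : ℝ)) = (A : ℝ) := by
    rw [hA]; push_cast; ring
  have hmain : (m : ℝ) / ((A : ℝ) / m + 1) ≤ t := by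
    rcases Nat.eq_zero_or_pos m with hm0 | hmpos
    · have hA0 : A = 0 := by
        rw [hA]
        have : E = ∅ := Finset.card_eq_zero.mp hm0
        simp [this]
      rw [hm0, hA0]
      simp
    · have hmr : (0 : ℝ) < m := by exact_mod_cast hmpos
      have hdpos : (0 : ℝ) < (A : ℝ) / m + 1 := by positivity
      rw [div_le_iff₀ hdpos]
      have h1 : (t : ℝ) * ((A : ℝ) / m + 1) = (t * (A + m) : ℝ) / m := by
        field_simp
      rw [h1, le_div_iff₀ hmr]
      have : (m : ℝ) * m = ((m ^ 2 : ℕ) : ℝ) := by push_cast; ring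
      rw [this]
      have h2 : ((t * (A + m) : ℕ) : ℝ) = (t : ℝ) * ((A : ℝ) + m) := by push_cast; ring
      rw [← h2]
      exact_mod_cast hCS
  refine ⟨hmatch, ?_, ?_⟩
  · rw [hcardim, hAcast]
    exact hmain
  · intro OPT hOPT _
    rw [hcardim, hAcast]
    have hle : (OPT.ncard : ℝ) ≤ m := by
      have := Set.ncard_le_ncard hOPT E.finite_toSet
      rw [Set.ncard_coe_finset] at this
      exact_mod_cast this
    have hdpos : (0 : ℝ) < (A : ℝ) / m + 1 := by positivity
    calc (OPT.ncard : ℝ) / ((A : ℝ) / m + 1)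
        ≤ (m : ℝ) / ((A : ℝ) / m + 1) := by gcongr
      _ ≤ t := hmain
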